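/- Let V_n denote the space of functions of the form z^n p_n(z) + ... + z p_1(z) + p_0(z) where each p_i is 2-periodic. For every ψ ∈ V_n there exists φ ∈ V_{n+1} such that φ(z+1) + φ(z) = ψ(z) for all z. -/

import Mathlib

/-- Membership in `V_n`: quasi-polynomials of degree ≤ n with continuous 2-periodic
coefficients. -/
def QuasiPoly (n : ℕ) (ψ : ℝ → ℂ) : Prop :=
  ∃ p : Fin (n + 1) → (ℝ → ℂ),
    (∀ i, Continuous (p i)) ∧
    (∀ i, ∀ z : ℝ, p i (z + 2) = p i z) ∧
    (∀ z : ℝ, ψ z = ∑ i : Fin (n + 1), (z : ℂ) ^ (i : ℕ) * p i z)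



open Polynomial

/-- Solve `f(X+1) + f = q` with degree control. -/
lemma exL (m : ℕ) : ∀ q : Polynomial ℂ, q.natDegree ≤ m →
    ∃ f : Polynomial ℂ, f.natDegree ≤ m ∧ f.comp (X + 1) + f = q := by
  induction m with
  | zero =>
    intro q hq
    have hq' : q = C (q.coeff 0) := Polynomial.eq_C_of_natDegree_le_zero hq
    refine ⟨C (q.coeff 0 / 2), by simp, ?_⟩
    rw [Polynomial.C_comp, ← Polynomial.C_add]
    have h2 : q.coeff 0 / 2 + q.coeff 0 / 2 = q.coeff 0 := by ring
    rw [h2, ← hq']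
  | succ m ih =>
    intro q hq
    set c := q.coeff (m + 1) with hc
    set f1 : Polynomial ℂ := C (c / 2) * X ^ (m + 1) with hf1
    set r := q - (f1.comp (X + 1) + f1) with hr0
    have hcomp : f1.comp (X + 1) = C (c / 2) * (X + 1) ^ (m + 1) := by
      simp [hf1, Polynomial.mul_comp, Polynomial.pow_comp]
    have hrc : ∀ N, r.coeff N = q.coeff N -
        (c / 2 * ((m + 1).choose N) + c / 2 * (if N = m + 1 then 1 else 0)) := by
      intro N
      rw [hr0, Polynomial.coeff_sub, Polynomial.coeff_add, hcomp, Polynomial.coeff_C_mul,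
        Polynomial.coeff_X_add_one_pow, hf1, Polynomial.coeff_C_mul, Polynomial.coeff_X_pow]
    have hr : r.natDegree ≤ m := by
      refine Polynomial.natDegree_le_iff_coeff_eq_zero.mpr fun N hN => ?_
      rcases eq_or_lt_of_le (Nat.succ_le_of_lt hN) with h | h
      · have h' : N = m + 1 := by omega
        rw [hrc, h', if_pos rfl, Nat.choose_self, ← hc]
        push_cast; ring
      · have h1 : q.coeff N = 0 :=
          Polynomial.coeff_eq_zero_of_natDegree_lt (lt_of_le_of_lt hq h)
        rw [hrc, h1, if_neg (by omega), Nat.choose_eq_zero_of_lt h]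
        push_cast; ring
    obtain ⟨f2, hf2d, hf2⟩ := ih r hr
    refine ⟨f1 + f2, ?_, ?_⟩
    · refine le_trans (Polynomial.natDegree_add_le _ _) (max_le ?_ (le_trans hf2d (by omega)))
      exact le_trans (Polynomial.natDegree_C_mul_le _ _) (by simp)
    · rw [Polynomial.add_comp]
      have h3 : f1.comp (X + 1) + f1 + r = q := by rw [hr0]; ring
      linear_combination hf2 + h3

/-- Solve `g - g(X+1) = q` with degree control. -/
lemma exM (m : ℕ) : ∀ q : Polynomial ℂ, q.natDegree ≤ m →
    ∃ g : Polynomial ℂ, g.natDegree ≤ m + 1 ∧ g - g.comp (X + 1) = q := by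
  induction m with
  | zero =>
    intro q hq
    have hq' : q = C (q.coeff 0) := Polynomial.eq_C_of_natDegree_le_zero hq
    refine ⟨-(C (q.coeff 0)) * X, ?_, ?_⟩
    · refine le_trans (Polynomial.natDegree_mul_le) (by simp)
    · conv_rhs => rw [hq']
      simp only [Polynomial.mul_comp, Polynomial.neg_comp, Polynomial.C_comp,
        Polynomial.X_comp]
      ring
  | succ m ih =>
    intro q hq
    set c := q.coeff (m + 1) with hc
    set g1 : Polynomial ℂ := C (-(c / (m + 2))) * X ^ (m + 2) with hg1
    set r := q - (g1 - g1.comp (X + 1)) with hr0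
    have hm2 : ((m : ℂ) + 2) ≠ 0 := by
      have : ((m : ℂ) + 2) = ((m + 2 : ℕ) : ℂ) := by push_cast; ring
      rw [this]; exact_mod_cast Nat.succ_ne_zero (m + 1)
    have hcomp : g1.comp (X + 1) = C (-(c / (m + 2))) * (X + 1) ^ (m + 2) := by
      simp [hg1, Polynomial.mul_comp, Polynomial.pow_comp]
    have hrc : ∀ N, r.coeff N = q.coeff N -
        (-(c / (m + 2)) * (if N = m + 2 then 1 else 0)
          - -(c / (m + 2)) * ((m + 2).choose N)) := by
      intro N
      simp only [hr0, hg1, hcomp, Polynomial.coeff_sub, Polynomial.coeff_C_mul,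
        Polynomial.coeff_X_add_one_pow, Polynomial.coeff_X_pow, Polynomial.mul_comp,
        Polynomial.pow_comp, Polynomial.C_comp, Polynomial.X_comp, Polynomial.add_comp,
        Polynomial.one_comp]
    have hr : r.natDegree ≤ m := by
      refine Polynomial.natDegree_le_iff_coeff_eq_zero.mpr fun N hN => ?_
      rcases eq_or_lt_of_le (Nat.succ_le_of_lt hN) with h | h
      · have hch : ((m + 2).choose (m + 1) : ℂ) = (m : ℂ) + 2 := by
          rw [Nat.choose_succ_self_right]; push_cast; ring
        have h' : N = m + 1 := by omega
        rw [hrc, h', if_neg (by omega), hch, ← hc]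
        field_simp
        ring
      · have h1 : q.coeff N = 0 :=
          Polynomial.coeff_eq_zero_of_natDegree_lt (lt_of_le_of_lt hq h)
        rcases eq_or_lt_of_le (Nat.succ_le_of_lt h) with h2 | h2
        · have h2' : N = m + 2 := by omega
          rw [hrc, h1, if_pos h2', h2', Nat.choose_self]
          push_cast; ring
        · rw [hrc, h1, if_neg (by omega), Nat.choose_eq_zero_of_lt h2]
          push_cast; ring
    obtain ⟨g2, hg2d, hg2⟩ := ih r hr
    refine ⟨g1 + g2, ?_, ?_⟩
    · refine le_trans (Polynomial.natDegree_add_le _ _) (max_le ?_ (le_trans hg2d (by omega)))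
      exact le_trans (Polynomial.natDegree_C_mul_le _ _) (by simp)
    · rw [Polynomial.add_comp]
      have h3 : (g1 - g1.comp (X + 1)) + r = q := by rw [hr0]; ring
      linear_combination hg2 + h3

/-- For every `ψ ∈ V_n` there exists `φ ∈ V_{n+1}` with `(T+1)φ = ψ`. -/
theorem quasiPoly_surjective_shift_plus_one (n : ℕ) (ψ : ℝ → ℂ) (hψ : QuasiPoly n ψ) :
    ∃ φ : ℝ → ℂ, QuasiPoly (n + 1) φ ∧ ∀ z : ℝ, φ (z + 1) + φ z = ψ z := by
  obtain ⟨p, hc, hper, hrep⟩ := hψ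
  -- even/odd parts under shift by 1
  set pp : Fin (n + 1) → ℝ → ℂ := fun i z => (p i z + p i (z + 1)) / 2 with hpp
  set pm : Fin (n + 1) → ℝ → ℂ := fun i z => (p i z - p i (z + 1)) / 2 with hpm
  have hpp1 : ∀ i z, pp i (z + 1) = pp i z := by
    intro i z
    simp only [hpp]
    rw [show z + 1 + 1 = z + 2 by ring, hper]
    ring
  have hpm1 : ∀ i z, pm i (z + 1) = -pm i z := by
    intro i z
    simp only [hpm]
    rw [show z + 1 + 1 = z + 2 by ring, hper]
    ring
  -- polynomial solutions
  have hf : ∀ i : Fin (n + 1), ∃ f : Polynomial ℂ, f.natDegree ≤ n + 1 ∧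
      f.comp (X + 1) + f = X ^ (i : ℕ) := by
    intro i
    apply exL
    refine le_trans (Polynomial.natDegree_X_pow_le _) ?_
    omega
  have hg : ∀ i : Fin (n + 1), ∃ g : Polynomial ℂ, g.natDegree ≤ n + 1 ∧
      g - g.comp (X + 1) = X ^ (i : ℕ) := by
    intro i
    apply exM
    refine le_trans (Polynomial.natDegree_X_pow_le _) ?_
    omega
  choose f hfd hfe using hf
  choose g hgd hge using hg
  refine ⟨fun z => ∑ i : Fin (n + 1), ((f i).eval (z : ℂ) * pp i z + (g i).eval (z : ℂ) * pm i z),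
    ⟨fun j z => ∑ i : Fin (n + 1), ((f i).coeff j * pp i z + (g i).coeff j * pm i z),
      ?_, ?_, ?_⟩, ?_⟩
  · -- continuity
    intro j
    apply continuous_finset_sum
    intro i _
    have hc1 : Continuous fun z : ℝ => p i (z + 1) :=
      (hc i).comp (continuous_id.add continuous_const)
    fun_prop
  · -- periodicity
    intro j z
    refine Finset.sum_congr rfl fun i _ => ?_
    have h21 : p i (z + 2 + 1) = p i (z + 1) := by
      rw [show z + 2 + 1 = z + 1 + 2 by ring, hper]
    simp only [hpp, hpm, hper, h21]
  · -- representation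
    intro z
    dsimp only
    have hev : ∀ h : Polynomial ℂ, h.natDegree ≤ n + 1 →
        h.eval (z : ℂ) = ∑ j : Fin (n + 1 + 1), (z : ℂ) ^ (j : ℕ) * h.coeff j := by
      intro h hd
      rw [Polynomial.eval_eq_sum_range' (n := n + 1 + 1) (by omega) (z : ℂ),
        Fin.sum_univ_eq_sum_range (fun j => (z : ℂ) ^ j * h.coeff j)]
      exact Finset.sum_congr rfl fun j _ => by ring
    have key : ∀ i : Fin (n + 1),
        (f i).eval (z : ℂ) * pp i z + (g i).eval (z : ℂ) * pm i z
        = ∑ j : Fin (n + 1 + 1),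
            (z : ℂ) ^ (j : ℕ) * ((f i).coeff j * pp i z + (g i).coeff j * pm i z) := by
      intro i
      rw [hev (f i) (hfd i), hev (g i) (hgd i), Finset.sum_mul, Finset.sum_mul,
        ← Finset.sum_add_distrib]
      exact Finset.sum_congr rfl fun j _ => by ring
    rw [Finset.sum_congr rfl fun i _ => key i, Finset.sum_comm]
    exact Finset.sum_congr rfl fun j _ => (Finset.mul_sum _ _ _).symm
  · -- functional equation
    intro z
    rw [hrep z, ← Finset.sum_add_distrib]
    apply Finset.sum_congr rfl
    intro i _
    have hfz : (f i).eval ((z : ℂ) + 1) + (f i).eval (z : ℂ) = (z : ℂ) ^ (i : ℕ) := by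
      have := congrArg (Polynomial.eval (z : ℂ)) (hfe i)
      simpa [Polynomial.eval_comp] using this
    have hgz : (g i).eval (z : ℂ) - (g i).eval ((z : ℂ) + 1) = (z : ℂ) ^ (i : ℕ) := by
      have := congrArg (Polynomial.eval (z : ℂ)) (hge i)
      simpa [Polynomial.eval_comp] using this
    have hsum : pp i z + pm i z = p i z := by simp [hpp, hpm]; ring
    push_cast
    rw [hpp1 i z, hpm1 i z]
    calc (f i).eval ((z : ℂ) + 1) * pp i z + (g i).eval ((z : ℂ) + 1) * (-pm i z) +
          ((f i).eval (z : ℂ) * pp i z + (g i).eval (z : ℂ) * pm i z)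
        = ((f i).eval ((z : ℂ) + 1) + (f i).eval (z : ℂ)) * pp i z +
          ((g i).eval (z : ℂ) - (g i).eval ((z : ℂ) + 1)) * pm i z := by ring
      _ = (z : ℂ) ^ (i : ℕ) * (pp i z + pm i z) := by rw [hfz, hgz]; ring
      _ = (z : ℂ) ^ (i : ℕ) * p i z := by rw [hsum]
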